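/- Let α > 0 and let p, q, u be non-negative continuous functions on [a, b] with q monotonically increasing on [a, b). If u(t) ≤ p(t) + q(t) ∫_a^t (t−s)^{α−1} u(s) ds for all t ∈ [a, b), then u(t) ≤ p(t) + ∫_a^t [ Σ_{n=1}^∞ (q(t) Γ(α))^n / Γ(nα) · (t−s)^{nα−1} p(s) ] ds for all t ∈ [a, b). -/

import Mathlib

set_option maxHeartbeats 1000000
open MeasureTheory Set intervalIntegral

theorem gg_integrable {α : ℝ} (hα : 0 < α) {a t : ℝ} (hat : a ≤ t) {f : ℝ → ℝ}
    (hf : Continuous f) :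
    IntervalIntegrable (fun s => (t - s) ^ (α - 1) * f s) volume a t := by
  have h1 : IntervalIntegrable (fun s : ℝ => (t - s) ^ (α - 1)) volume a t := by
    have := (intervalIntegrable_rpow' (a := t - a) (b := t - t)
      (r := α - 1) (by linarith)).comp_sub_left t
    simpa using this
  exact h1.mul_continuousOn hf.continuousOn

theorem gg_integral_kernel {α : ℝ} (hα : 0 < α) {a t : ℝ} (hat : a ≤ t) :
    ∫ s in a..t, (t - s) ^ (α - 1) = (t - a) ^ α / α := by
  rw [intervalIntegral.integral_comp_sub_left (fun x : ℝ => x ^ (α - 1)) t]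
  rw [integral_rpow (Or.inl (by linarith))]
  rw [sub_self]
  rw [Real.zero_rpow (by linarith : α - 1 + 1 ≠ 0)]
  rw [sub_add_cancel]
  ring


theorem gg_beta {β γ : ℝ} (hβ : 0 < β) (hγ : 0 < γ) {r t : ℝ} (hrt : r < t) :
    ∫ s in r..t, (t - s) ^ (β - 1) * (s - r) ^ (γ - 1)
      = Real.Gamma β * Real.Gamma γ / Real.Gamma (β + γ) * (t - r) ^ (β + γ - 1) := by
  have ha : (0:ℝ) < t - r := by linarith
  have hshift : (∫ s in r..t, (t - s) ^ (β - 1) * (s - r) ^ (γ - 1))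
      = ∫ x in (0:ℝ)..(t - r), x ^ (γ - 1) * (t - r - x) ^ (β - 1) := by
    have := intervalIntegral.integral_comp_add_right (a := (0:ℝ)) (b := t - r)
      (fun s => (t - s) ^ (β - 1) * (s - r) ^ (γ - 1)) r
    simp only [zero_add, sub_add_cancel] at this
    rw [← this]
    apply intervalIntegral.integral_congr
    intro x hx
    dsimp only
    ring_nf
  have hgb : Complex.betaIntegral γ β
      = ((Real.Gamma β * Real.Gamma γ / Real.Gamma (β + γ) : ℝ) : ℂ) := by
    have h := Complex.Gamma_mul_Gamma_eq_betaIntegral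
      (s := (γ:ℂ)) (t := (β:ℂ)) (by simpa using hγ) (by simpa using hβ)
    have e1 : ((γ:ℂ) + β) = ((β + γ : ℝ) : ℂ) := by push_cast; ring
    rw [e1, Complex.Gamma_ofReal, Complex.Gamma_ofReal, Complex.Gamma_ofReal] at h
    have hne : ((Real.Gamma (β + γ) : ℝ) : ℂ) ≠ 0 := by
      exact_mod_cast (Real.Gamma_pos_of_pos (by linarith)).ne'
    rw [Complex.ofReal_div, Complex.ofReal_mul]
    field_simp
    linear_combination -h
  have hscaled := Complex.betaIntegral_scaled (γ:ℂ) (β:ℂ) ha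
  have hid : (∫ x in (0:ℝ)..(t - r), (x:ℂ) ^ ((γ:ℂ) - 1) * (((t - r : ℝ):ℂ) - x) ^ ((β:ℂ) - 1))
      = ((∫ x in (0:ℝ)..(t - r), x ^ (γ - 1) * (t - r - x) ^ (β - 1) : ℝ) : ℂ) := by
    rw [← intervalIntegral.integral_ofReal]
    apply intervalIntegral.integral_congr
    intro x hx
    rw [uIcc_of_le ha.le] at hx
    dsimp only
    rw [Complex.ofReal_mul, Complex.ofReal_cpow hx.1 (γ - 1),
      Complex.ofReal_cpow (by linarith [hx.2] : (0:ℝ) ≤ t - r - x) (β - 1)]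
    push_cast
    ring
  have key : ((∫ x in (0:ℝ)..(t - r), x ^ (γ - 1) * (t - r - x) ^ (β - 1) : ℝ) : ℂ)
      = ((Real.Gamma β * Real.Gamma γ / Real.Gamma (β + γ) * (t - r) ^ (β + γ - 1) : ℝ) : ℂ) := by
    rw [← hid, hscaled, hgb, Complex.ofReal_mul,
      Complex.ofReal_cpow ha.le (β + γ - 1)]
    rw [show ((γ:ℂ) + β - 1) = (((β + γ - 1 : ℝ)) : ℂ) by push_cast; ring]
    ring
  rw [hshift]
  exact_mod_cast key

theorem gg_fubini {α β a t : ℝ} (hα : 0 < α) (hβ : 0 < β) (hat : a < t)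
    {f : ℝ → ℝ} (hf : Continuous f) (hfnn : ∀ s, 0 ≤ f s) :
    IntervalIntegrable
        (fun s => (t - s) ^ (β - 1) * ∫ r in a..s, (s - r) ^ (α - 1) * f r) volume a t
    ∧ (∫ s in a..t, (t - s) ^ (β - 1) * ∫ r in a..s, (s - r) ^ (α - 1) * f r)
      = Real.Gamma β * Real.Gamma α / Real.Gamma (β + α)
        * ∫ r in a..t, (t - r) ^ (β + α - 1) * f r := by
  set μ : Measure ℝ := volume with hμ
  set T : Set (ℝ × ℝ) := {z | a < z.2 ∧ z.2 < z.1 ∧ z.1 < t} with hT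
  set φ : ℝ × ℝ → ℝ :=
    fun z => (t - z.1) ^ (β - 1) * ((z.1 - z.2) ^ (α - 1) * f z.2) with hφdef
  set H : ℝ × ℝ → ℝ := T.indicator φ with hHdef
  have hTopen : IsOpen T := by
    have h1 : IsOpen {z : ℝ × ℝ | a < z.2} := isOpen_lt continuous_const continuous_snd
    have h2 : IsOpen {z : ℝ × ℝ | z.2 < z.1} := isOpen_lt continuous_snd continuous_fst
    have h3 : IsOpen {z : ℝ × ℝ | z.1 < t} := isOpen_lt continuous_fst continuous_const
    have : T = {z : ℝ × ℝ | a < z.2} ∩ ({z : ℝ × ℝ | z.2 < z.1} ∩ {z : ℝ × ℝ | z.1 < t}) := by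
      ext z; simp [hT, mem_setOf_eq, and_assoc]
    rw [this]; exact h1.inter (h2.inter h3)
  have hTm : MeasurableSet T := hTopen.measurableSet
  have hφcont : ContinuousOn φ T := by
    apply ContinuousOn.mul
    · apply ContinuousOn.rpow_const
      · exact (continuous_const.sub continuous_fst).continuousOn
      · intro z hz; left; rw [hT] at hz; simp only [mem_setOf_eq] at hz
        have : z.1 < t := hz.2.2
        intro h; rw [sub_eq_zero] at h; exact absurd h.symm (ne_of_lt this)
    · apply ContinuousOn.mul
      · apply ContinuousOn.rpow_const
        · exact (continuous_fst.sub continuous_snd).continuousOn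
        · intro z hz; left; rw [hT] at hz; simp only [mem_setOf_eq] at hz
          have : z.2 < z.1 := hz.2.1
          intro h; rw [sub_eq_zero] at h; exact absurd h.symm (ne_of_lt this)
      · exact (hf.comp continuous_snd).continuousOn
  have hHasm : AEStronglyMeasurable H (μ.prod μ) := by
    rw [hHdef]
    rw [aestronglyMeasurable_indicator_iff hTm]
    exact hφcont.aestronglyMeasurable hTm
  -- section in r, for fixed s
  have hsec : ∀ s : ℝ, (fun r => H (s, r))
      = if a < s ∧ s < t then
          (Ioo a s).indicator (fun r => (t - s) ^ (β - 1) * ((s - r) ^ (α - 1) * f r))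
        else 0 := by
    intro s
    funext r
    by_cases hs : a < s ∧ s < t
    · rw [if_pos hs]
      by_cases hr : r ∈ Ioo a s
      · rw [indicator_of_mem hr]
        have : (s, r) ∈ T := by rw [hT]; exact ⟨hr.1, hr.2, hs.2⟩
        rw [hHdef, indicator_of_mem this]
      · rw [indicator_of_notMem hr]
        have : (s, r) ∉ T := by
          rw [hT]; intro h; exact hr ⟨h.1, h.2.1⟩
        rw [hHdef, indicator_of_notMem this]
    · rw [if_neg hs]
      have : (s, r) ∉ T := by
        rw [hT]; intro h; exact hs ⟨lt_trans h.1 h.2.1, h.2.2⟩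
      rw [hHdef, indicator_of_notMem this]
      rfl
  -- section in s, for fixed r
  have hsec2 : ∀ r : ℝ, (fun s => H (s, r))
      = if a < r ∧ r < t then
          (Ioo r t).indicator (fun s => (t - s) ^ (β - 1) * ((s - r) ^ (α - 1) * f r))
        else 0 := by
    intro r
    funext s
    by_cases hr : a < r ∧ r < t
    · rw [if_pos hr]
      by_cases hs : s ∈ Ioo r t
      · rw [indicator_of_mem hs]
        have : (s, r) ∈ T := by rw [hT]; exact ⟨hr.1, hs.1, hs.2⟩
        rw [hHdef, indicator_of_mem this]
      · rw [indicator_of_notMem hs]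
        have : (s, r) ∉ T := by
          rw [hT]; intro h; exact hs ⟨h.2.1, h.2.2⟩
        rw [hHdef, indicator_of_notMem this]
    · rw [if_neg hr]
      have : (s, r) ∉ T := by
        rw [hT]; intro h; exact hr ⟨h.1, lt_trans h.2.1 h.2.2⟩
      rw [hHdef, indicator_of_notMem this]
      rfl

  -- nonnegativity of H
  have hHnn : ∀ z : ℝ × ℝ, 0 ≤ H z := by
    intro z
    rw [hHdef]
    by_cases hz : z ∈ T
    · rw [indicator_of_mem hz]
      rw [hT] at hz
      have h1 : (0:ℝ) ≤ t - z.1 := by linarith [hz.2.2]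
      have h2 : (0:ℝ) ≤ z.1 - z.2 := by linarith [hz.2.1]
      exact mul_nonneg (Real.rpow_nonneg h1 _)
        (mul_nonneg (Real.rpow_nonneg h2 _) (hfnn _))
    · rw [indicator_of_notMem hz]
  -- bound on f
  obtain ⟨M, hM⟩ := (isCompact_Icc (a := a) (b := t)).exists_bound_of_continuousOn
    hf.continuousOn
  have hM0 : 0 ≤ M := le_trans (norm_nonneg _) (hM a ⟨le_refl a, hat.le⟩)
  set B := M * ((t - a) ^ α / α) with hBdef
  have hB0 : 0 ≤ B := by
    apply mul_nonneg hM0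
    apply div_nonneg (Real.rpow_nonneg (by linarith) _) hα.le
  -- inner integral bound
  have hinner_nn : ∀ s, a ≤ s → 0 ≤ ∫ r in a..s, (s - r) ^ (α - 1) * f r := by
    intro s hs
    apply intervalIntegral.integral_nonneg hs
    intro r hr
    exact mul_nonneg (Real.rpow_nonneg (by linarith [hr.2]) _) (hfnn r)
  have hinner_le : ∀ s, a ≤ s → s ≤ t → (∫ r in a..s, (s - r) ^ (α - 1) * f r) ≤ B := by
    intro s hs hst
    have h1 : (∫ r in a..s, (s - r) ^ (α - 1) * f r) ≤ ∫ r in a..s, (s - r) ^ (α - 1) * M := by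
      apply intervalIntegral.integral_mono_on hs (gg_integrable hα hs hf)
        ((gg_integrable hα hs continuous_const))
      intro r hr
      apply mul_le_mul_of_nonneg_left _ (Real.rpow_nonneg (by linarith [hr.2]) _)
      exact le_trans (le_abs_self _) (hM r ⟨hr.1, le_trans hr.2 hst⟩)
    have h2 : (∫ r in a..s, (s - r) ^ (α - 1) * M) = (s - a) ^ α / α * M := by
      rw [intervalIntegral.integral_mul_const, gg_integral_kernel hα hs]
    have h3 : (s - a) ^ α / α * M ≤ B := by
      rw [hBdef, mul_comm]
      have h4 : (s - a) ^ α ≤ (t - a) ^ α :=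
        Real.rpow_le_rpow (by linarith) (by linarith) hα.le
      exact mul_le_mul_of_nonneg_left ((div_le_div_iff_of_pos_right hα).mpr h4) hM0
    linarith
  -- all r-sections are integrable
  have hsecint : ∀ s : ℝ, Integrable (fun r => H (s, r)) μ := by
    intro s
    rw [hsec s]
    split_ifs with hs
    · have base : IntervalIntegrable
          (fun r => (t - s) ^ (β - 1) * ((s - r) ^ (α - 1) * f r)) volume a s :=
        (gg_integrable hα hs.1.le hf).const_mul _
      have : IntegrableOn (fun r => (t - s) ^ (β - 1) * ((s - r) ^ (α - 1) * f r))
          (Ioo a s) μ :=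
        (intervalIntegrable_iff_integrableOn_Ioo_of_le hs.1.le).mp base
      exact this.integrable_indicator measurableSet_Ioo
    · exact integrable_zero _ _ _
  -- value of the r-section integral
  set Φ : ℝ → ℝ := fun s => (t - s) ^ (β - 1) * ∫ r in a..s, (s - r) ^ (α - 1) * f r
    with hΦdef
  have hval : (fun s => ∫ r, H (s, r) ∂μ) = (Ioo a t).indicator Φ := by
    funext s
    by_cases hs : a < s ∧ s < t
    · rw [hsec s, if_pos hs, MeasureTheory.integral_indicator measurableSet_Ioo,
        indicator_of_mem (mem_Ioo.mpr hs), hΦdef]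
      dsimp only
      rw [MeasureTheory.integral_const_mul]
      congr 1
      rw [intervalIntegral.integral_of_le hs.1.le, integral_Ioc_eq_integral_Ioo]
    · rw [hsec s, if_neg hs, indicator_of_notMem (by simpa [mem_Ioo] using hs)]
      simp
  -- integrability of the norm-integral function
  have hnorm_eq : (fun s => ∫ r, ‖H (s, r)‖ ∂μ) = fun s => ∫ r, H (s, r) ∂μ := by
    funext s
    congr 1
    funext r
    exact Real.norm_of_nonneg (hHnn _)
  have hG : Integrable ((Ioo a t).indicator fun s => (t - s) ^ (β - 1) * B) μ := by
    have base : IntervalIntegrable (fun s => (t - s) ^ (β - 1) * B) volume a t :=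
      gg_integrable hβ hat.le continuous_const
    exact ((intervalIntegrable_iff_integrableOn_Ioo_of_le hat.le).mp base).integrable_indicator
      measurableSet_Ioo
  have hnormint : Integrable (fun s => ∫ r, ‖H (s, r)‖ ∂μ) μ := by
    apply Integrable.mono' hG
    · rw [hnorm_eq]
      exact hHasm.integral_prod_right'
    · apply Filter.Eventually.of_forall
      intro s
      rw [show (∫ r, ‖H (s, r)‖ ∂μ) = ∫ r, H (s, r) ∂μ from congrFun hnorm_eq s,
        show (∫ r, H (s, r) ∂μ) = (Ioo a t).indicator Φ s from congrFun hval s]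
      by_cases hs : s ∈ Ioo a t
      · rw [indicator_of_mem hs, indicator_of_mem hs, hΦdef]
        rw [mem_Ioo] at hs
        dsimp only
        have h1 : (0:ℝ) ≤ (t - s) ^ (β - 1) := Real.rpow_nonneg (by linarith [hs.2]) _
        rw [Real.norm_of_nonneg (mul_nonneg h1 (hinner_nn s hs.1.le))]
        exact mul_le_mul_of_nonneg_left (hinner_le s hs.1.le hs.2.le) h1
      · rw [indicator_of_notMem hs, indicator_of_notMem hs, norm_zero]

  -- H is integrable on the product
  have hHint : Integrable H (μ.prod μ) :=
    (integrable_prod_iff hHasm).mpr ⟨Filter.Eventually.of_forall hsecint, hnormint⟩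
  -- part (i)
  have hΦIoo : IntegrableOn Φ (Ioo a t) μ := by
    have h1 := hHint.integral_prod_left
    rw [hval] at h1
    exact (integrable_indicator_iff measurableSet_Ioo).mp h1
  have part1 : IntervalIntegrable Φ volume a t :=
    (intervalIntegrable_iff_integrableOn_Ioo_of_le hat.le).mpr hΦIoo
  refine ⟨part1, ?_⟩
  -- Fubini
  have hswap : (∫ s, ∫ r, H (s, r) ∂μ ∂μ) = ∫ r, ∫ s, H (s, r) ∂μ ∂μ := by
    apply MeasureTheory.integral_integral_swap
    exact hHint
  -- LHS
  have hlhs : (∫ s, ∫ r, H (s, r) ∂μ ∂μ) = ∫ s in a..t, Φ s := by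
    rw [hval, MeasureTheory.integral_indicator measurableSet_Ioo,
      intervalIntegral.integral_of_le hat.le, integral_Ioc_eq_integral_Ioo]
  -- RHS
  set c : ℝ := Real.Gamma β * Real.Gamma α / Real.Gamma (β + α) with hcdef
  have hval2 : (fun r => ∫ s, H (s, r) ∂μ)
      = (Ioo a t).indicator (fun r => c * ((t - r) ^ (β + α - 1) * f r)) := by
    funext r
    by_cases hr : a < r ∧ r < t
    · rw [hsec2 r, if_pos hr, MeasureTheory.integral_indicator measurableSet_Ioo,
        indicator_of_mem (mem_Ioo.mpr hr)]
      rw [← integral_Ioc_eq_integral_Ioo, ← intervalIntegral.integral_of_le hr.2.le]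
      simp_rw [← mul_assoc]
      rw [intervalIntegral.integral_mul_const, gg_beta hβ hα hr.2, hcdef]
    · rw [hsec2 r, if_neg hr, indicator_of_notMem (by simpa [mem_Ioo] using hr)]
      simp
  rw [← hlhs, hswap, hval2, MeasureTheory.integral_indicator measurableSet_Ioo,
    ← integral_Ioc_eq_integral_Ioo, ← intervalIntegral.integral_of_le hat.le,
    intervalIntegral.integral_const_mul, hcdef]

theorem gg_gamma_lb {R y : ℝ} (hR : 1 ≤ R) (hy : 3 ≤ y) :
    R ^ (y - 2) / Real.exp R ≤ Real.Gamma y := by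
  have hy0 : (0:ℝ) ≤ y := by linarith
  set m := ⌊y⌋₊ with hm
  have hm3 : 3 ≤ m := Nat.le_floor (by exact_mod_cast hy)
  have hmle : (m : ℝ) ≤ y := Nat.floor_le hy0
  have h1 : Real.Gamma (m : ℝ) ≤ Real.Gamma y := by
    apply Real.Gamma_strictMonoOn_Ici.monotoneOn
    · simp only [mem_Ici]; exact_mod_cast by omega
    · simp only [mem_Ici]; linarith
    · exact hmle
  have hcast : ((m - 1 : ℕ) : ℝ) = (m : ℝ) - 1 := by
    have h1m : 1 ≤ m := by omega
    push_cast [Nat.cast_sub h1m]; ring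
  have h2 : Real.Gamma (m : ℝ) = (Nat.factorial (m - 1) : ℝ) := by
    have : (m : ℝ) = ((m - 1 : ℕ) : ℝ) + 1 := by rw [hcast]; ring
    rw [this, Real.Gamma_nat_eq_factorial]
  have h3 : R ^ (m - 1 : ℕ) / Real.exp R ≤ (Nat.factorial (m - 1) : ℝ) := by
    rw [div_le_iff₀ (Real.exp_pos R)]
    have := Real.pow_div_factorial_le_exp (x := R) (by linarith) (m - 1)
    rw [div_le_iff₀ (by positivity)] at this
    linarith [this]
  have h4 : R ^ (y - 2) ≤ R ^ (m - 1 : ℕ) := by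
    rw [← Real.rpow_natCast R (m - 1)]
    apply Real.rpow_le_rpow_of_exponent_le hR
    rw [hcast]
    have := Nat.lt_floor_add_one y
    linarith
  calc R ^ (y - 2) / Real.exp R ≤ R ^ (m - 1 : ℕ) / Real.exp R :=
        by gcongr
      _ ≤ (Nat.factorial (m - 1) : ℝ) := h3
      _ = Real.Gamma (m : ℝ) := h2.symm
      _ ≤ Real.Gamma y := h1

theorem gg_summable {α : ℝ} (hα : 0 < α) (β : ℝ) {x : ℝ} (hx : 0 ≤ x) :
    Summable (fun k : ℕ => x ^ k / Real.Gamma ((k : ℝ) * α + β)) := by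
  set R := max 1 ((2 * x) ^ (1 / α)) with hRdef
  have hR1 : (1:ℝ) ≤ R := le_max_left _ _
  have hR0 : (0:ℝ) < R := by linarith
  have hRα1 : (1:ℝ) ≤ R ^ α := Real.one_le_rpow hR1 hα.le
  have hRA : 2 * x ≤ R ^ α := by
    rcases le_total (2 * x) 1 with h | h
    · linarith
    · have h2 : (2 * x) ^ (1 / α) ≤ R := le_max_right _ _
      have := Real.rpow_le_rpow (Real.rpow_nonneg (by linarith) _) h2 hα.le
      rwa [← Real.rpow_mul (by linarith : (0:ℝ) ≤ 2 * x), one_div,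
        inv_mul_cancel₀ hα.ne', Real.rpow_one] at this
  have hRapos : (0:ℝ) < R ^ α := by linarith
  have hhalf : x / R ^ α ≤ 1 / 2 := by
    rw [div_le_div_iff₀ hRapos (by norm_num)]
    linarith
  set C := Real.exp R * R ^ (2 - β) with hCdef
  have hC0 : 0 ≤ C := by positivity
  set K := ⌈(3 - β) / α⌉₊ with hKdef
  have hKα : ∀ k : ℕ, K ≤ k → 3 ≤ (k : ℝ) * α + β := by
    intro k hk
    have h1 : ((3 : ℝ) - β) / α ≤ (K : ℝ) := Nat.le_ceil _
    have h2 : (K : ℝ) ≤ (k : ℝ) := by exact_mod_cast hk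
    have := (div_le_iff₀ hα).mp (h1.trans h2)
    linarith
  rw [← summable_nat_add_iff K]
  have hsumg : Summable (fun n : ℕ => C * ((1 / 2) ^ K * (1 / 2) ^ n : ℝ)) :=
    ((summable_geometric_of_lt_one (by norm_num) (by norm_num)).mul_left _).mul_left _
  have hnn : ∀ n : ℕ, 0 ≤ x ^ (n + K) / Real.Gamma (((n + K : ℕ) : ℝ) * α + β) := by
    intro n
    have h3 := hKα (n + K) (by omega)
    exact div_nonneg (pow_nonneg hx _) (Real.Gamma_pos_of_pos (by linarith)).le
  have hle : ∀ n : ℕ, x ^ (n + K) / Real.Gamma (((n + K : ℕ) : ℝ) * α + β)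
      ≤ C * ((1 / 2) ^ K * (1 / 2) ^ n : ℝ) := by
    intro n
    set k := n + K with hk
    have h3 : 3 ≤ (k : ℝ) * α + β := hKα k (by omega)
    set y := (k : ℝ) * α + β with hy
    have hlb := gg_gamma_lb hR1 h3
    have hlbpos : 0 < R ^ (y - 2) / Real.exp R := by positivity
    have step1 : x ^ k / Real.Gamma y ≤ x ^ k / (R ^ (y - 2) / Real.exp R) :=
      div_le_div_of_nonneg_left (pow_nonneg hx _) hlbpos hlb
    have hexp : R ^ (y - 2) = R ^ ((k:ℝ) * α) * R ^ (β - 2) := by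
      rw [← Real.rpow_add hR0]; congr 1; rw [hy]; ring
    have hpow : R ^ ((k:ℝ) * α) = (R ^ α) ^ k := by
      rw [mul_comm, Real.rpow_mul hR0.le, Real.rpow_natCast]
    have step2 : x ^ k / (R ^ (y - 2) / Real.exp R) = C * (x ^ k / (R ^ α) ^ k) := by
      rw [hexp, hpow, hCdef]
      rw [show R ^ (2 - β) = (R ^ (β - 2))⁻¹ by
        rw [← Real.rpow_neg hR0.le]; congr 1; ring]
      field_simp
    have step3 : x ^ k / (R ^ α) ^ k ≤ (1 / 2) ^ k := by
      rw [← div_pow]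
      exact pow_le_pow_left₀ (by positivity) hhalf k
    calc x ^ k / Real.Gamma y ≤ x ^ k / (R ^ (y - 2) / Real.exp R) := step1
      _ = C * (x ^ k / (R ^ α) ^ k) := step2
      _ ≤ C * (1 / 2) ^ k := mul_le_mul_of_nonneg_left step3 hC0
      _ = C * ((1 / 2) ^ K * (1 / 2) ^ n) := by rw [hk, pow_add]; ring
  exact Summable.of_nonneg_of_le hnn hle hsumg

/-- Generalized Gronwall inequality (Lemma 2). -/
theorem generalized_gronwall (a b α : ℝ) (hα : 0 < α)
    (p q u : ℝ → ℝ)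
    (hp : ContinuousOn p (Icc a b)) (hq : ContinuousOn q (Icc a b))
    (hu : ContinuousOn u (Icc a b))
    (hpnn : ∀ t ∈ Icc a b, 0 ≤ p t) (hqnn : ∀ t ∈ Icc a b, 0 ≤ q t)
    (hunn : ∀ t ∈ Icc a b, 0 ≤ u t)
    (hqmono : MonotoneOn q (Ico a b))
    (hineq : ∀ t ∈ Ico a b,
      u t ≤ p t + q t * ∫ s in a..t, (t - s) ^ (α - 1) * u s) :
    ∀ t ∈ Ico a b,
      u t ≤ p t + ∫ s in a..t, ∑' n : ℕ,
        (q t * Real.Gamma α) ^ (n + 1) / Real.Gamma ((n + 1) * α)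
          * (t - s) ^ ((n + 1) * α - 1) * p s := by
  intro t ht
  obtain ⟨hta, htb⟩ := ht
  have hab : a ≤ b := hta.trans htb.le
  have hΓα : 0 < Real.Gamma α := Real.Gamma_pos_of_pos hα
  -- continuous extensions
  set U : ℝ → ℝ := IccExtend hab ((Icc a b).restrict u) with hUdef
  set P : ℝ → ℝ := IccExtend hab ((Icc a b).restrict p) with hPdef
  have hUc : Continuous U := hu.restrict.Icc_extend'
  have hPc : Continuous P := hp.restrict.Icc_extend'
  have hUeq : ∀ x ∈ Icc a b, U x = u x := by
    intro x hx; rw [hUdef, IccExtend_of_mem hab _ hx]; rfl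
  have hPeq : ∀ x ∈ Icc a b, P x = p x := by
    intro x hx; rw [hPdef, IccExtend_of_mem hab _ hx]; rfl
  have hUnn : ∀ x, 0 ≤ U x := fun x => hunn _ (projIcc a b hab x).2
  have hPnn : ∀ x, 0 ≤ P x := fun x => hpnn _ (projIcc a b hab x).2
  -- basic facts
  have hsubI : Icc a t ⊆ Ico a b := fun x hx => ⟨hx.1, lt_of_le_of_lt hx.2 htb⟩
  have hsubC : Icc a t ⊆ Icc a b := fun x hx => ⟨hx.1, hx.2.trans htb.le⟩
  -- the base inequality, in terms of U and P
  have hineqU : ∀ t' ∈ Icc a t,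
      U t' ≤ P t' + q t' * ∫ s in a..t', (t' - s) ^ (α - 1) * U s := by
    intro t' ht'
    have h1 := hineq t' (hsubI ht')
    have h2 : (∫ s in a..t', (t' - s) ^ (α - 1) * u s)
        = ∫ s in a..t', (t' - s) ^ (α - 1) * U s := by
      apply intervalIntegral.integral_congr
      intro s hs
      rw [uIcc_of_le ht'.1] at hs
      dsimp only
      rw [hUeq s (hsubC ⟨hs.1, hs.2.trans ht'.2⟩)]
    rw [hUeq t' (hsubC ht'), hPeq t' (hsubC ht'), ← h2]
    exact h1
  -- notation
  set J : ℕ → ℝ → ℝ := fun k t' => ∫ s in a..t', (t' - s) ^ (((k:ℝ)+1)*α - 1) * P s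
    with hJdef
  set I : ℕ → ℝ → ℝ := fun k t' => ∫ s in a..t', (t' - s) ^ (((k:ℝ)+1)*α - 1) * U s
    with hIdef
  set c : ℕ → ℝ → ℝ :=
    fun k t' => (q t' * Real.Gamma α) ^ (k+1) / Real.Gamma (((k:ℝ)+1)*α) with hcdef
  have hβpos : ∀ k : ℕ, 0 < ((k:ℝ)+1)*α := by
    intro k
    apply mul_pos _ hα
    positivity
  have hcnn : ∀ (k : ℕ), ∀ t' ∈ Icc a t, 0 ≤ c k t' := by
    intro k t' ht'
    rw [hcdef]
    apply div_nonneg _ (Real.Gamma_pos_of_pos (hβpos k)).le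
    exact pow_nonneg (mul_nonneg (hqnn t' (hsubC ht')) hΓα.le) _
  have hInn : ∀ (k : ℕ), ∀ t' ∈ Icc a t, 0 ≤ I k t' := by
    intro k t' ht'
    rw [hIdef]
    apply intervalIntegral.integral_nonneg ht'.1
    intro s hs
    exact mul_nonneg (Real.rpow_nonneg (by linarith [hs.2]) _) (hUnn s)
  have hJnn : ∀ (k : ℕ), ∀ t' ∈ Icc a t, 0 ≤ J k t' := by
    intro k t' ht'
    rw [hJdef]
    apply intervalIntegral.integral_nonneg ht'.1
    intro s hs
    exact mul_nonneg (Real.rpow_nonneg (by linarith [hs.2]) _) (hPnn s)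
  -- the induction claim
  have claim : ∀ n : ℕ, ∀ t' ∈ Icc a t,
      U t' ≤ P t' + (∑ k ∈ Finset.range n, c k t' * J k t') + c n t' * I n t' := by
    intro n
    induction n with
    | zero =>
      intro t' ht'
      simp only [Finset.range_zero, Finset.sum_empty, add_zero]
      have h0 : c 0 t' = q t' := by
        rw [hcdef]
        norm_num
        field_simp
      have hI0 : I 0 t' = ∫ s in a..t', (t' - s) ^ (α - 1) * U s := by
        rw [hIdef]
        norm_num
      rw [h0, hI0]
      exact hineqU t' ht'
    | succ n ih =>
      intro t' ht'
      rcases eq_or_lt_of_le ht'.1 with heq | hlt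
      · -- t' = a : all integrals vanish
        have hIz : ∀ m : ℕ, I m t' = 0 := by
          intro m; rw [hIdef, ← heq]; exact intervalIntegral.integral_same
        have hJz : ∀ m : ℕ, J m t' = 0 := by
          intro m; rw [hJdef, ← heq]; exact intervalIntegral.integral_same
        have h := ih t' ht'
        simp only [hIz, hJz, mul_zero, Finset.sum_const_zero, add_zero] at h ⊢
        exact h
      · -- a < t'
        have hfub := gg_fubini (α := α) (β := ((n:ℝ)+1)*α) (a := a) (t := t')
          hα (hβpos n) hlt hUc hUnn
        have hD2 : (0:ℝ) < ((n:ℝ)+1)*α + α := by positivity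
        have int1 : IntervalIntegrable
            (fun s => (t' - s) ^ (((n:ℝ)+1)*α - 1) * P s) volume a t' :=
          gg_integrable (hβpos n) ht'.1 hPc
        have int0 : IntervalIntegrable
            (fun s => (t' - s) ^ (((n:ℝ)+1)*α - 1) * U s) volume a t' :=
          gg_integrable (hβpos n) ht'.1 hUc
        have int2 : IntervalIntegrable (fun s => (t' - s) ^ (((n:ℝ)+1)*α - 1)
            * ∫ r in a..s, (s - r) ^ (α - 1) * U r) volume a t' := hfub.1
        have step : I n t' ≤ J n t'
            + q t' * (Real.Gamma (((n:ℝ)+1)*α) * Real.Gamma α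
                / Real.Gamma (((n:ℝ)+1)*α + α) * I (n+1) t') := by
          have hmono : I n t' ≤ ∫ s in a..t',
              ((t' - s) ^ (((n:ℝ)+1)*α - 1) * P s
               + q t' * ((t' - s) ^ (((n:ℝ)+1)*α - 1)
                  * ∫ r in a..s, (s - r) ^ (α - 1) * U r)) := by
            rw [hIdef]
            apply intervalIntegral.integral_mono_on ht'.1 int0
              (int1.add (int2.const_mul _))
            intro s hs
            have hsIcc : s ∈ Icc a t := ⟨hs.1, hs.2.trans ht'.2⟩
            have h3 := hineqU s hsIcc
            have hinn_nn : 0 ≤ ∫ r in a..s, (s - r) ^ (α - 1) * U r := by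
              apply intervalIntegral.integral_nonneg hs.1
              intro r hr
              exact mul_nonneg (Real.rpow_nonneg (by linarith [hr.2]) _) (hUnn r)
            have hq_le : q s ≤ q t' := hqmono (hsubI hsIcc) (hsubI ht') hs.2
            have hK : 0 ≤ (t' - s) ^ (((n:ℝ)+1)*α - 1) :=
              Real.rpow_nonneg (by linarith [hs.2]) _
            have h4 : U s ≤ P s + q t' * ∫ r in a..s, (s - r) ^ (α - 1) * U r := by
              have := mul_le_mul_of_nonneg_right hq_le hinn_nn
              linarith
            calc (t' - s) ^ (((n:ℝ)+1)*α - 1) * U s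
                ≤ (t' - s) ^ (((n:ℝ)+1)*α - 1)
                  * (P s + q t' * ∫ r in a..s, (s - r) ^ (α - 1) * U r) :=
                  mul_le_mul_of_nonneg_left h4 hK
              _ = (t' - s) ^ (((n:ℝ)+1)*α - 1) * P s
                  + q t' * ((t' - s) ^ (((n:ℝ)+1)*α - 1)
                    * ∫ r in a..s, (s - r) ^ (α - 1) * U r) := by ring
          rw [intervalIntegral.integral_add int1 (int2.const_mul _),
            intervalIntegral.integral_const_mul] at hmono
          have hI1 : (∫ r in a..t', (t' - r) ^ (((n:ℝ)+1)*α + α - 1) * U r)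
              = I (n+1) t' := by
            rw [hIdef]
            apply intervalIntegral.integral_congr
            intro r _
            dsimp only
            congr 2
            push_cast
            ring
          rw [hfub.2, hI1] at hmono
          exact hmono
        have hΓn : Real.Gamma (((n:ℝ)+1)*α) ≠ 0 := (Real.Gamma_pos_of_pos (hβpos n)).ne'
        have hΓn2 : Real.Gamma (((n:ℝ)+1)*α + α) ≠ 0 := (Real.Gamma_pos_of_pos hD2).ne'
        have halg : ∀ X : ℝ, c n t' * (J n t'
              + q t' * (Real.Gamma (((n:ℝ)+1)*α) * Real.Gamma α
                / Real.Gamma (((n:ℝ)+1)*α + α) * X))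
            = c n t' * J n t' + c (n+1) t' * X := by
          intro X
          rw [hcdef]
          dsimp only
          have h3 : Real.Gamma ((((n+1:ℕ):ℝ) + 1)*α) = Real.Gamma (((n:ℝ)+1)*α + α) := by
            congr 1
            push_cast
            ring
          rw [h3]
          field_simp
          ring
        calc U t' ≤ P t' + (∑ k ∈ Finset.range n, c k t' * J k t') + c n t' * I n t' :=
              ih t' ht'
          _ ≤ P t' + (∑ k ∈ Finset.range n, c k t' * J k t')
              + (c n t' * J n t' + c (n+1) t' * I (n+1) t') := by
              have h5 := mul_le_mul_of_nonneg_left step (hcnn n t' ht')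
              rw [halg (I (n+1) t')] at h5
              linarith
          _ = P t' + (∑ k ∈ Finset.range (n+1), c k t' * J k t')
              + c (n+1) t' * I (n+1) t' := by
              rw [Finset.sum_range_succ]
              ring
  -- bounds on U and P on [a, t]
  obtain ⟨Mu, hMu⟩ := (isCompact_Icc (a := a) (b := t)).exists_bound_of_continuousOn
    hUc.continuousOn
  obtain ⟨Mp, hMp⟩ := (isCompact_Icc (a := a) (b := t)).exists_bound_of_continuousOn
    hPc.continuousOn
  have hMu0 : 0 ≤ Mu := le_trans (norm_nonneg _) (hMu a ⟨le_refl a, hta⟩)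
  have hMp0 : 0 ≤ Mp := le_trans (norm_nonneg _) (hMp a ⟨le_refl a, hta⟩)
  have hUle : ∀ s ∈ Icc a t, U s ≤ Mu := fun s hs => le_trans (le_abs_self _) (hMu s hs)
  have hPle : ∀ s ∈ Icc a t, P s ≤ Mp := fun s hs => le_trans (le_abs_self _) (hMp s hs)
  set x : ℝ := q t * Real.Gamma α * (t - a) ^ α with hxdef
  have htmem : t ∈ Icc a t := ⟨hta, le_refl t⟩
  have hx0 : 0 ≤ x := by
    apply mul_nonneg (mul_nonneg (hqnn t (hsubC htmem)) hΓα.le)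
    exact Real.rpow_nonneg (by linarith) _
  -- generic product bound
  have hprod : ∀ (k : ℕ) (V : ℝ → ℝ) (Mv : ℝ), Continuous V → 0 ≤ Mv →
      (∀ s ∈ Icc a t, V s ≤ Mv) →
      c k t * ∫ s in a..t, (t - s) ^ (((k:ℝ)+1)*α - 1) * V s
        ≤ Mv * (x ^ (k+1) / Real.Gamma (((k:ℝ)+1)*α + 1)) := by
    intro k V Mv hVc hMv0 hVle
    have h1 : (∫ s in a..t, (t - s) ^ (((k:ℝ)+1)*α - 1) * V s)
        ≤ ∫ s in a..t, (t - s) ^ (((k:ℝ)+1)*α - 1) * Mv := by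
      apply intervalIntegral.integral_mono_on hta
        (gg_integrable (hβpos k) hta hVc) (gg_integrable (hβpos k) hta continuous_const)
      intro s hs
      exact mul_le_mul_of_nonneg_left (hVle s hs)
        (Real.rpow_nonneg (by linarith [hs.2]) _)
    rw [intervalIntegral.integral_mul_const, gg_integral_kernel (hβpos k) hta] at h1
    have h2 : c k t * ∫ s in a..t, (t - s) ^ (((k:ℝ)+1)*α - 1) * V s
        ≤ c k t * ((t - a) ^ (((k:ℝ)+1)*α) / (((k:ℝ)+1)*α) * Mv) :=
      mul_le_mul_of_nonneg_left h1 (hcnn k t htmem)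
    have h3 : c k t * ((t - a) ^ (((k:ℝ)+1)*α) / (((k:ℝ)+1)*α) * Mv)
        = Mv * (x ^ (k+1) / Real.Gamma (((k:ℝ)+1)*α + 1)) := by
      have hg1 : Real.Gamma (((k:ℝ)+1)*α + 1) = ((k:ℝ)+1)*α * Real.Gamma (((k:ℝ)+1)*α) :=
        Real.Gamma_add_one (hβpos k).ne'
      have hg2 : (t - a) ^ (((k:ℝ)+1)*α) = ((t - a) ^ α) ^ (k+1) := by
        rw [mul_comm, Real.rpow_mul (by linarith : (0:ℝ) ≤ t - a),
          show ((k:ℝ)+1) = ((k+1 : ℕ) : ℝ) by push_cast; ring, Real.rpow_natCast]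
      have hx1 : x ^ (k+1) = (q t * Real.Gamma α) ^ (k+1) * ((t - a) ^ α) ^ (k+1) := by
        rw [hxdef, mul_pow]
      rw [hcdef, hg1, hg2, hx1]
      have hΓk : Real.Gamma (((k:ℝ)+1)*α) ≠ 0 := (Real.Gamma_pos_of_pos (hβpos k)).ne'
      field_simp
    linarith
  have hcI : ∀ k : ℕ, c k t * I k t ≤ Mu * (x ^ (k+1) / Real.Gamma (((k:ℝ)+1)*α + 1)) :=
    fun k => hprod k U Mu hUc hMu0 hUle
  have hcJ : ∀ k : ℕ, c k t * J k t ≤ Mp * (x ^ (k+1) / Real.Gamma (((k:ℝ)+1)*α + 1)) :=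
    fun k => hprod k P Mp hPc hMp0 hPle
  -- summable majorant
  have hsum0 : Summable (fun k : ℕ => x ^ (k+1) / Real.Gamma (((k:ℝ)+1)*α + 1)) := by
    apply ((gg_summable hα (α + 1) hx0).mul_left x).congr
    intro n
    rw [show ((n:ℝ)+1)*α + 1 = (n:ℝ)*α + (α+1) by ring, pow_succ]
    ring
  have hcJnn : ∀ k : ℕ, 0 ≤ c k t * J k t :=
    fun k => mul_nonneg (hcnn k t htmem) (hJnn k t htmem)
  have hsumJ : Summable (fun k : ℕ => c k t * J k t) :=
    Summable.of_nonneg_of_le hcJnn hcJ (hsum0.mul_left Mp)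
  -- pass to the limit
  have hfinal : U t ≤ P t + ∑' k : ℕ, c k t * J k t := by
    have h6 : ∀ n : ℕ, U t ≤ P t + (∑' k : ℕ, c k t * J k t)
        + Mu * (x ^ (n+1) / Real.Gamma (((n:ℝ)+1)*α + 1)) := by
      intro n
      have h7 := claim n t htmem
      have h8 := hcI n
      have h9 : (∑ k ∈ Finset.range n, c k t * J k t) ≤ ∑' k : ℕ, c k t * J k t :=
        Summable.sum_le_tsum (Finset.range n) (fun k _ => hcJnn k) hsumJ
      linarith
    have htend : Filter.Tendsto
        (fun n : ℕ => P t + (∑' k : ℕ, c k t * J k t)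
          + Mu * (x ^ (n+1) / Real.Gamma (((n:ℝ)+1)*α + 1)))
        Filter.atTop (nhds (P t + (∑' k : ℕ, c k t * J k t) + 0)) := by
      apply Filter.Tendsto.add tendsto_const_nhds
      exact ((hsum0.mul_left Mu).tendsto_atTop_zero)
    rw [add_zero] at htend
    exact ge_of_tendsto htend (Filter.Eventually.of_forall h6)
  -- swap tsum and integral
  set g : ℕ → ℝ → ℝ := fun k s => c k t * ((t - s) ^ (((k:ℝ)+1)*α - 1) * P s) with hgdef
  have hgii : ∀ k : ℕ, IntervalIntegrable (g k) volume a t :=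
    fun k => (gg_integrable (hβpos k) hta hPc).const_mul _
  have hgint : ∀ k : ℕ, IntegrableOn (g k) (Ioc a t) volume :=
    fun k => (intervalIntegrable_iff_integrableOn_Ioc_of_le hta).mp (hgii k)
  have hgnn : ∀ k : ℕ, ∀ s ∈ Ioc a t, 0 ≤ g k s := by
    intro k s hs
    rw [hgdef]
    exact mul_nonneg (hcnn k t htmem)
      (mul_nonneg (Real.rpow_nonneg (by linarith [hs.2]) _) (hPnn s))
  have hgval : ∀ k : ℕ, (∫ s in Ioc a t, g k s) = c k t * J k t := by
    intro k
    rw [← intervalIntegral.integral_of_le hta, hgdef, hJdef]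
    exact intervalIntegral.integral_const_mul _ _
  have hasm : ∀ k : ℕ, AEStronglyMeasurable (g k) (volume.restrict (Ioc a t)) :=
    fun k => (hgint k).aestronglyMeasurable
  have hlint : (∑' k : ℕ, ∫⁻ s in Ioc a t, ‖g k s‖₊) ≠ ⊤ := by
    have heach : ∀ k : ℕ, (∫⁻ s in Ioc a t, ‖g k s‖₊) = ENNReal.ofReal (c k t * J k t) := by
      intro k
      have hae : ∀ᵐ s ∂(volume.restrict (Ioc a t)), 0 ≤ g k s :=
        (ae_restrict_iff' measurableSet_Ioc).mpr (Filter.Eventually.of_forall (hgnn k))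
      rw [← hgval k, ofReal_integral_eq_lintegral_ofReal (hgint k) hae]
      apply lintegral_congr_ae
      filter_upwards [hae] with s hs
      exact Real.enorm_eq_ofReal hs
    simp_rw [heach]
    rw [← ENNReal.ofReal_tsum_of_nonneg hcJnn hsumJ]
    exact ENNReal.ofReal_ne_top
  have hswap2 : (∫ s in Ioc a t, ∑' k : ℕ, g k s) = ∑' k : ℕ, ∫ s in Ioc a t, g k s :=
    integral_tsum hasm hlint
  -- final identification
  have hfinal2 : (∑' k : ℕ, c k t * J k t)
      = ∫ s in a..t, ∑' n : ℕ,
          (q t * Real.Gamma α) ^ (n + 1) / Real.Gamma (((n:ℝ) + 1) * α)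
            * (t - s) ^ (((n:ℝ) + 1) * α - 1) * p s := by
    rw [intervalIntegral.integral_of_le hta]
    have h10 : (∑' k : ℕ, c k t * J k t) = ∫ s in Ioc a t, ∑' k : ℕ, g k s := by
      rw [hswap2]
      congr 1
      funext k
      exact (hgval k).symm
    rw [h10]
    apply setIntegral_congr_fun measurableSet_Ioc
    intro s hs
    have hsmem : s ∈ Icc a b := hsubC ⟨hs.1.le, hs.2⟩
    apply tsum_congr
    intro k
    rw [hgdef]
    dsimp only
    rw [hPeq s hsmem]
    ring
  rw [hUeq t (hsubC htmem), hPeq t (hsubC htmem)] at hfinal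
  rw [← hfinal2]
  exact hfinal
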